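/- arXiv:1401.7300 — 2 statements merged into one kernel-verified Lean document; each statement's English description precedes it below -/
import Mathlib

section
/- Let ε : G → Q be a group homomorphism, extended linearly to a map of group algebras ℂG → ℂQ (also denoted ε). Then for every element a ∈ ℂG all of whose coefficients are non-negative real numbers, one has ‖λ_G(a)‖ ≤ ‖λ_Q(ε(a))‖. -/
noncomputable section

open scoped ENNReal ComplexOrder Cardinal
open Filter Topology

/-- `ℓ²(G)`, the Hilbert space of square-summable complex functions on `G`. -/
abbrev ell2 (G : Type*) : Type _ := lp (fun _ : G => ℂ) 2

section LeftRegular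

variable {G : Type*} [Group G]

theorem memℓp_shift (g : G) (f : ell2 G) :
    Memℓp (fun h : G => f (g⁻¹ * h)) 2 := by
  apply memℓp_gen
  have hf : Summable fun h : G => ‖f h‖ ^ (2 : ℝ≥0∞).toReal :=
    (memℓp_gen_iff (by norm_num)).1 (lp.memℓp f)
  exact ((Equiv.mulLeft g⁻¹).summable_iff).2 hf

/-- Left translation by `g` on `ℓ²(G)` as a linear map: `(lamAux g f) h = f (g⁻¹ h)`. -/
def lamAux (g : G) : ell2 G →ₗ[ℂ] ell2 G where
  toFun f := ⟨fun h => f (g⁻¹ * h), memℓp_shift g f⟩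
  map_add' _ _ := rfl
  map_smul' _ _ := rfl

theorem norm_lamAux (g : G) (f : ell2 G) : ‖lamAux g f‖ = ‖f‖ := by
  have h2 : (0 : ℝ) < (2 : ℝ≥0∞).toReal := by norm_num
  rw [lp.norm_eq_tsum_rpow h2, lp.norm_eq_tsum_rpow h2]
  congr 1
  exact (Equiv.mulLeft g⁻¹).tsum_eq fun h => ‖f h‖ ^ (2 : ℝ≥0∞).toReal

/-- The left regular representation of `G` on `ℓ²(G)`: `(lam g f) h = f (g⁻¹ h)`. -/
def lam (g : G) : ell2 G →L[ℂ] ell2 G :=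
  LinearMap.mkContinuous (lamAux g) 1 fun f => by rw [norm_lamAux, one_mul]

end LeftRegular

/-- The linear extension of the left regular representation to the group algebra `ℂ[G]`:
`lamAlg (Σ α_g g) = Σ α_g • lam g`. -/
def lamAlg {G : Type*} [Group G] (a : MonoidAlgebra ℂ G) : ell2 G →L[ℂ] ell2 G :=
  a.coeff.sum fun g c => c • lam g

section FiberAux

variable {G Q : Type*} (ε : G → Q)

/-- restriction of an `ℓ²` function to a fiber of `ε` -/
def fiberVec (f : ell2 G) (q : Q) : lp (fun _ : (ε ⁻¹' {q} : Set G) => ℂ) 2 :=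
  ⟨fun x => f x.1, by
    apply memℓp_gen
    have hf : Summable fun h : G => ‖f h‖ ^ (2 : ℝ≥0∞).toReal :=
      (memℓp_gen_iff (by norm_num)).1 (lp.memℓp f)
    exact hf.subtype _⟩

lemma fiberVec_apply (f : ell2 G) (q : Q) (x : (ε ⁻¹' {q} : Set G)) :
    fiberVec ε f q x = f x.1 := rfl

lemma norm_fiberVec_rpow (f : ell2 G) (q : Q) :
    ‖fiberVec ε f q‖ ^ (2 : ℝ≥0∞).toReal
      = ∑' x : (ε ⁻¹' {q} : Set G), ‖f x.1‖ ^ (2 : ℝ≥0∞).toReal :=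
  lp.norm_rpow_eq_tsum (by norm_num) _

lemma hasSum_fiberVec (f : ell2 G) :
    HasSum (fun q => ‖fiberVec ε f q‖ ^ (2 : ℝ≥0∞).toReal) (‖f‖ ^ (2 : ℝ≥0∞).toReal) := by
  have hf : Summable fun h : G => ‖f h‖ ^ (2 : ℝ≥0∞).toReal :=
    (memℓp_gen_iff (by norm_num)).1 (lp.memℓp f)
  have h1 : HasSum (fun h : G => ‖f h‖ ^ (2 : ℝ≥0∞).toReal) (‖f‖ ^ (2 : ℝ≥0∞).toReal) := by
    rw [lp.norm_rpow_eq_tsum (by norm_num) f]; exact hf.hasSum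
  have := h1.tsum_fiberwise ε
  simpa only [norm_fiberVec_rpow] using this

end FiberAux

section GroupFiber
variable {G Q : Type*} [Group G] [Group Q] (ε : G →* Q)

/-- the fiber over `(ε g)⁻¹ * q` is carried to the fiber over `q` by left mult by `g`. -/
def fiberShiftEquiv (g : G) (q : Q) :
    ((ε ⁻¹' {(ε g)⁻¹ * q} : Set G)) ≃ ((ε ⁻¹' {q} : Set G)) where
  toFun y := ⟨g * y.1, by
    have hy : ε y.1 = (ε g)⁻¹ * q := y.2
    simp [Set.mem_preimage, hy]⟩
  invFun x := ⟨g⁻¹ * x.1, by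
    have hx : ε x.1 = q := x.2
    simp [Set.mem_preimage, hx]⟩
  left_inv y := by ext; simp
  right_inv x := by ext; simp

-- shift: the fiber norm of the translate
lemma norm_fiberVec_shift (g : G) (f : ell2 G) (q : Q) :
    ‖fiberVec ε (lam g f) q‖ = ‖fiberVec ε f ((ε g)⁻¹ * q)‖ := by
  have h2 : ((2 : ℝ≥0∞).toReal) ≠ 0 := by norm_num
  refine (Real.rpow_left_inj (norm_nonneg _) (norm_nonneg _) h2).1 ?_
  rw [norm_fiberVec_rpow, norm_fiberVec_rpow]
  rw [← (fiberShiftEquiv ε g q).tsum_eq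
    (fun x : (ε ⁻¹' {q} : Set G) => ‖(lam g f) x.1‖ ^ (2 : ℝ≥0∞).toReal)]
  apply tsum_congr
  intro y
  have h1 : (lam g f) ((fiberShiftEquiv ε g q y : G)) = f (g⁻¹ * (g * y.1)) := rfl
  rw [h1, inv_mul_cancel_left]

end GroupFiber

section Main
variable {G Q : Type*} [Group G] [Group Q] (ε : G →* Q)

/-- The fiberwise `ℓ²`-norm pushforward of `f` to `Q`. -/
def FV (f : ell2 G) : ell2 Q :=
  ⟨fun q => ((‖fiberVec ε f q‖ : ℝ) : ℂ), by
    apply memℓp_gen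
    refine (hasSum_fiberVec ε f).summable.congr fun q => ?_
    rw [Complex.norm_real, norm_norm]⟩

lemma FV_apply (f : ell2 G) (q : Q) : FV ε f q = ((‖fiberVec ε f q‖ : ℝ) : ℂ) := rfl

lemma norm_FV (f : ell2 G) : ‖FV ε f‖ = ‖f‖ := by
  refine (Real.rpow_left_inj (norm_nonneg _) (norm_nonneg _) (by norm_num :
    ((2 : ℝ≥0∞).toReal) ≠ 0)).1 ?_
  rw [lp.norm_rpow_eq_tsum (by norm_num) (FV ε f), ← (hasSum_fiberVec ε f).tsum_eq]
  apply tsum_congr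
  intro q
  rw [FV_apply, Complex.norm_real, norm_norm]

theorem norm_lamAlg_le_of_monoidHom' {G Q : Type*} [Group G] [Group Q] (ε : G →* Q)
    (a : MonoidAlgebra ℂ G) (ha : ∀ g : G, 0 ≤ a.coeff g) :
    ‖lamAlg a‖ ≤ ‖lamAlg (MonoidAlgebra.mapDomainRingHom ℂ ε a)‖ := by
  set b := MonoidAlgebra.mapDomainRingHom ℂ ε a with hb
  set r : G → ℝ := fun g => (a.coeff g).re with hr
  have hcoef : ∀ g : G, a.coeff g = ((r g : ℝ) : ℂ) := by
    intro g
    obtain ⟨h1, h2⟩ := Complex.nonneg_iff.1 (ha g)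
    exact Complex.ext rfl (by simpa using h2.symm)
  have hrpos : ∀ g : G, 0 ≤ r g := fun g => (Complex.nonneg_iff.1 (ha g)).1
  have hnorm_coef : ∀ g : G, ‖a.coeff g‖ = r g := fun g => by
    rw [hcoef g, Complex.norm_real]
    exact Real.norm_of_nonneg (hrpos g)
  refine ContinuousLinearMap.opNorm_le_bound _ (norm_nonneg _) fun f => ?_
  -- the Q-side vector
  set B : ell2 Q := lamAlg b (FV ε f) with hB
  -- unfolding lamAlg as finite sums
  have hL : lamAlg a f = ∑ g ∈ a.coeff.support, a.coeff g • (lam g f) := by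
    simp [lamAlg, Finsupp.sum, ContinuousLinearMap.sum_apply]
  have hbm : b = MonoidAlgebra.ofCoeff (Finsupp.mapDomain ε a.coeff) := by
    rw [hb, MonoidAlgebra.mapDomainRingHom_apply]
    rfl
  have hεa : lamAlg b = ∑ g ∈ a.coeff.support, a.coeff g • lam (ε g) := by
    rw [hbm]
    show (Finsupp.mapDomain ε a.coeff).sum (fun p c => c • lam p) = _
    rw [Finsupp.sum_mapDomain_index
      (fun p => by exact zero_smul ℂ (lam p))
      (fun p c₁ c₂ => by exact add_smul c₁ c₂ (lam p))]
    rfl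
  -- fiber decomposition of lamAlg a f
  have h_decomp : ∀ q : Q, fiberVec ε (lamAlg a f) q
      = ∑ g ∈ a.coeff.support, a.coeff g • fiberVec ε (lam g f) q := by
    intro q
    apply lp.ext
    funext x
    rw [lp.coeFn_sum, Finset.sum_apply]
    show (lamAlg a f) x.1 = _
    rw [hL, lp.coeFn_sum, Finset.sum_apply]
    refine Finset.sum_congr rfl fun g _ => ?_
    rw [lp.coeFn_smul, lp.coeFn_smul, Pi.smul_apply, Pi.smul_apply]
    rfl
  -- coordinates of B
  have hBq : ∀ q : Q, B q = ((∑ g ∈ a.coeff.support, r g * ‖fiberVec ε f ((ε g)⁻¹ * q)‖ : ℝ) : ℂ) := by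
    intro q
    rw [hB, hεa]
    have : (∑ g ∈ a.coeff.support, a.coeff g • lam (ε g)) (FV ε f) q
        = ∑ g ∈ a.coeff.support, a.coeff g * FV ε f ((ε g)⁻¹ * q) := by
      rw [ContinuousLinearMap.sum_apply, lp.coeFn_sum, Finset.sum_apply]
      refine Finset.sum_congr rfl fun g _ => ?_
      rw [ContinuousLinearMap.smul_apply, lp.coeFn_smul, Pi.smul_apply, smul_eq_mul]
      rfl
    rw [this]
    push_cast
    refine Finset.sum_congr rfl fun g _ => ?_
    rw [hcoef g, FV_apply]
  have hBq_norm : ∀ q : Q, ‖B q‖ = ∑ g ∈ a.coeff.support, r g * ‖fiberVec ε f ((ε g)⁻¹ * q)‖ := by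
    intro q
    rw [hBq q, Complex.norm_real]
    apply Real.norm_of_nonneg
    exact Finset.sum_nonneg fun g _ => mul_nonneg (hrpos g) (norm_nonneg _)
  -- pointwise inequality on fibers
  have hpt : ∀ q : Q, ‖fiberVec ε (lamAlg a f) q‖ ≤ ‖B q‖ := by
    intro q
    rw [h_decomp q, hBq_norm q]
    refine le_trans (norm_sum_le _ _) (le_of_eq ?_)
    refine Finset.sum_congr rfl fun g _ => ?_
    rw [norm_smul, hnorm_coef g, norm_fiberVec_shift]
  -- sum up
  have h2pos : (0 : ℝ) < (2 : ℝ≥0∞).toReal := by norm_num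
  have hsum : ‖lamAlg a f‖ ^ (2 : ℝ≥0∞).toReal ≤ ‖B‖ ^ (2 : ℝ≥0∞).toReal := by
    rw [← (hasSum_fiberVec ε (lamAlg a f)).tsum_eq, lp.norm_rpow_eq_tsum h2pos B]
    refine Summable.tsum_le_tsum (fun q => Real.rpow_le_rpow (norm_nonneg _) (hpt q) h2pos.le)
      (hasSum_fiberVec ε (lamAlg a f)).summable
      ((memℓp_gen_iff h2pos).1 (lp.memℓp B))
  have h1 : ‖lamAlg a f‖ ≤ ‖B‖ :=
    (Real.rpow_le_rpow_iff (norm_nonneg _) (norm_nonneg _) h2pos).1 hsum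
  calc ‖lamAlg a f‖ ≤ ‖B‖ := h1
    _ ≤ ‖lamAlg b‖ * ‖FV ε f‖ := (lamAlg b).le_opNorm _
    _ = ‖lamAlg b‖ * ‖f‖ := by rw [norm_FV]

end Main

/-- **Lemma 2.1 (b)**. For a group homomorphism `ε : G → Q` and `a ∈ ℝ₊G ⊆ ℂG` (an
element with non-negative real coefficients), `‖λ_G(a)‖ ≤ ‖λ_Q(ε(a))‖`. -/
theorem norm_lamAlg_le_of_monoidHom {G Q : Type*} [Group G] [Group Q] (ε : G →* Q)
    (a : MonoidAlgebra ℂ G) (ha : ∀ g : G, 0 ≤ a.coeff g) :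
    ‖lamAlg a‖ ≤ ‖lamAlg (MonoidAlgebra.mapDomainRingHom ℂ ε a)‖ := by
  exact norm_lamAlg_le_of_monoidHom' ε a ha
end
end

section
/- Let G be a group, A ⊆ G \ {1} a finite subset, n a positive integer, and let P = G ∗ F(X) ∗ F(Y) ∗ F(Z) be the free product of G with free groups F(X), F(Y), F(Z) having bases X = {x₁,…,x_n}, Y = {y_a : a ∈ A}, Z = {z_a : a ∈ A}, respectively (G, X, Y, Z viewed inside P via the canonical embeddings). Then the set T = {y_a x_i a x_i⁻¹ z_a : a ∈ A, 1 ≤ i ≤ n} consists of n·|A| pairwise distinct elements and is a basis of a free subgroup of P of rank n·|A|; that is, the homomorphism from the free group with basis indexed by A × {1,…,n} to P sending the (a,i)-th generator to y_a x_i a x_i⁻¹ z_a is injective. -/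
noncomputable section

open Monoid

section

variable {G : Type u} [Group G] (A : Finset G) (n : ℕ)

/-- The free product `P = G ∗ F(X) ∗ F(Y) ∗ F(Z)`, where `F(X)` is free with basis
`X = {x₁, …, x_n}` and `F(Y)`, `F(Z)` are free with bases `{y_a : a ∈ A}`,
`{z_a : a ∈ A}`. -/
abbrev FreeProdP (G : Type u) [Group G] (A : Finset G) (n : ℕ) : Type u :=
  Coprod (Coprod G (FreeGroup (Fin n))) (Coprod (FreeGroup ↥A) (FreeGroup ↥A))

/-- The canonical embedding `G → P`. -/
def iotaG : G →* FreeProdP G A n := Coprod.inl.comp Coprod.inl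

/-- The generator `xᵢ ∈ F(X) ⊆ P`. -/
def xGen (i : Fin n) : FreeProdP G A n := Coprod.inl (Coprod.inr (FreeGroup.of i))

/-- The generator `y_a ∈ F(Y) ⊆ P`. -/
def yGen (a : ↥A) : FreeProdP G A n := Coprod.inr (Coprod.inl (FreeGroup.of a))

/-- The generator `z_a ∈ F(Z) ⊆ P`. -/
def zGen (a : ↥A) : FreeProdP G A n := Coprod.inr (Coprod.inr (FreeGroup.of a))

/-- The family `T = {y_a xᵢ a xᵢ⁻¹ z_a : a ∈ A, 1 ≤ i ≤ n}`, indexed by `A × Fin n`. -/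
def tElt (p : ↥A × Fin n) : FreeProdP G A n :=
  yGen A n p.1 * xGen A n p.2 * iotaG A n (p.1 : G) * (xGen A n p.2)⁻¹ * zGen A n p.1

/-- The state space on which `P` will act. -/
abbrev StSp (G : Type u) [Group G] (A : Finset G) (n : ℕ) : Type u :=
  FreeGroup (↥A × Fin n) × G

open Classical in
/-- An auxiliary function: `wFun i g = (g, i)` if `g ∈ A`, else `1`. -/
def wFun (i : Fin n) (g : G) : FreeGroup (↥A × Fin n) :=
  if h : g ∈ A then FreeGroup.of (⟨g, h⟩, i) else 1

/-- Translation on the second coordinate. -/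
def transPerm (g : G) : Equiv.Perm (StSp G A n) where
  toFun p := (p.1, g * p.2)
  invFun p := (p.1, g⁻¹ * p.2)
  left_inv p := by simp [mul_assoc]
  right_inv p := by simp [mul_assoc]

/-- Translation as a homomorphism. -/
def transHom : G →* Equiv.Perm (StSp G A n) where
  toFun := transPerm A n
  map_one' := by ext p <;> simp [transPerm]
  map_mul' g h := by ext p <;> simp [transPerm, mul_assoc]

/-- The permutation corresponding to `xᵢ`. -/
def sigmaPerm (i : Fin n) : Equiv.Perm (StSp G A n) where
  toFun p := (wFun A n i p.2 * p.1, p.2)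
  invFun p := ((wFun A n i p.2)⁻¹ * p.1, p.2)
  left_inv p := by simp [mul_assoc]
  right_inv p := by simp [mul_assoc]

/-- The action of `P` on the state space. -/
def actHom : FreeProdP G A n →* Equiv.Perm (StSp G A n) :=
  Coprod.lift
    (Coprod.lift (transHom A n) (FreeGroup.lift fun i => sigmaPerm A n i))
    (Coprod.lift (FreeGroup.lift fun a => transHom A n (a : G)⁻¹)
      (FreeGroup.lift fun _ => 1))

lemma actHom_tElt (hA : (1 : G) ∉ A) (p : ↥A × Fin n) (u : FreeGroup (↥A × Fin n)) :
    actHom A n (tElt A n p) (u, (1 : G)) = (FreeGroup.of p * u, 1) := by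
  obtain ⟨a, i⟩ := p
  have ha : (a : G) ∈ A := a.2
  simp only [tElt, map_mul, map_inv, actHom, iotaG, xGen, yGen, zGen,
    MonoidHom.comp_apply, Coprod.lift_apply_inl, Coprod.lift_apply_inr,
    FreeGroup.lift_apply_of, Equiv.Perm.mul_apply, Equiv.Perm.one_apply]
  have h1 : (sigmaPerm A n i)⁻¹ (u, (1 : G)) = (u, 1) := by
    simp [sigmaPerm, Equiv.Perm.inv_def, Equiv.symm, wFun, hA]
  rw [h1]
  have h2 : transHom A n (a : G) (u, (1 : G)) = (u, (a : G)) := by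
    simp [transHom, transPerm]
  rw [h2]
  have h3 : sigmaPerm A n i (u, (a : G)) = (FreeGroup.of (a, i) * u, (a : G)) := by
    simp [sigmaPerm, wFun, ha]
  rw [h3]
  simp [transHom, transPerm, Equiv.Perm.inv_def, Equiv.symm]

lemma actHom_lift (hA : (1 : G) ∉ A) (w : FreeGroup (↥A × Fin n))
    (u : FreeGroup (↥A × Fin n)) :
    actHom A n (FreeGroup.lift (tElt A n) w) (u, (1 : G)) = (w * u, 1) := by
  induction w using FreeGroup.induction_on generalizing u with
  | C1 => simp
  | of p =>
    rw [FreeGroup.lift_apply_of]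
    exact actHom_tElt A n hA p u
  | inv_of p _ =>
    rw [map_inv,
      map_inv, FreeGroup.lift_apply_of, Equiv.Perm.inv_def, Equiv.symm_apply_eq,
      actHom_tElt A n hA p ((FreeGroup.of p)⁻¹ * u)]
    simp
  | mul v w hv hw =>
    simp only [map_mul, Equiv.Perm.mul_apply, hw, hv, mul_assoc]

end

/-- **Part of Corollary 4.5**. For a group `G`, a finite subset `A ⊆ G \ {1}` and
`P = G ∗ F(X) ∗ F(Y) ∗ F(Z)` as above, the set
`T = {y_a xᵢ a xᵢ⁻¹ z_a : a ∈ A, 1 ≤ i ≤ n}` is a basis of a free subgroup of `P` of rank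
`n|A|`: the homomorphism from the free group on `A × {1, …, n}` to `P` sending the
`(a, i)`-th generator to `y_a xᵢ a xᵢ⁻¹ z_a` is injective (in particular the elements of
`T` are pairwise distinct). -/
theorem tElt_freely_generates {G : Type u} [Group G] (A : Finset G) (hA : (1 : G) ∉ A)
    (n : ℕ) (hn : 0 < n) :
    Function.Injective (FreeGroup.lift (tElt (G := G) (A := A) (n := n))) := by
  rw [injective_iff_map_eq_one]
  intro w hw
  have := actHom_lift A n hA w 1
  rw [hw, map_one] at this
  simp only [Equiv.Perm.one_apply, mul_one, Prod.mk.injEq] at this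
  exact this.1.symm
end
end
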